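/- For positive integers n and m, write e(n) for the largest power of 2 dividing n. Then gcd(x^n + 1, x^m + 1) in Z[x] equals x^{gcd(n,m)} + 1 if e(n) = e(m), and equals 1 otherwise. -/
import Mathlib


open Polynomial

private lemma xps_dvd_xps {a b : ℕ} (h : a ∣ b) : (X : ℚ[X]) ^ a - 1 ∣ X ^ b - 1 := by
  obtain ⟨c, rfl⟩ := h
  have := sub_dvd_pow_sub_pow ((X : ℚ[X]) ^ a) 1 c
  simpa [pow_mul] using this

private lemma dvd_gcd_xps {g : ℚ[X]} (a b : ℕ) (ha : g ∣ X ^ a - 1) (hb : g ∣ X ^ b - 1) :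
    g ∣ (X : ℚ[X]) ^ Nat.gcd a b - 1 := by
  induction a, b using Nat.gcd.induction with
  | H0 b => simpa using hb
  | H1 a b hpos ih =>
    rw [Nat.gcd_rec]
    refine ih ?_ ha
    have key : (X : ℚ[X]) ^ (b % a) - 1 =
        (X ^ b - 1) - X ^ (b % a) * ((X ^ a) ^ (b / a) - 1) := by
      have hb' : (X : ℚ[X]) ^ b = X ^ (b % a) * (X ^ a) ^ (b / a) := by
        rw [← pow_mul, ← pow_add, Nat.mod_add_div]
      rw [hb']
      ring
    have h2 : g ∣ ((X : ℚ[X]) ^ a) ^ (b / a) - 1 := by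
      refine ha.trans ?_
      have := sub_dvd_pow_sub_pow ((X : ℚ[X]) ^ a) 1 (b / a)
      simpa using this
    rw [key]
    exact dvd_sub hb (h2.mul_left _)

private lemma xpa_dvd_xpa {a b : ℕ} (h : a ∣ b) (hodd : Odd (b / a)) :
    (X : ℚ[X]) ^ a + 1 ∣ X ^ b + 1 := by
  obtain ⟨c, rfl⟩ := h
  rcases Nat.eq_zero_or_pos a with rfl | hapos
  · simp
  rw [Nat.mul_div_cancel_left c hapos] at hodd
  have := Odd.add_dvd_pow_add_pow ((X : ℚ[X]) ^ a) 1 hodd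
  simpa [pow_mul] using this

private lemma cop_xpa_xps (k : ℕ) : IsCoprime ((X : ℚ[X]) ^ k + 1) ((X : ℚ[X]) ^ k - 1) := by
  refine ⟨C (1/2), -C (1/2), ?_⟩
  have : (C (1/2 : ℚ)) * (X ^ k + 1) + (-C (1/2 : ℚ)) * (X ^ k - 1)
      = C (1/2) + C (1/2) := by ring
  rw [this, ← C_add]
  norm_num

private lemma g_dvd_two_xps {g : ℚ[X]} (k : ℕ) (h1 : g ∣ X ^ k + 1) (h2 : g ∣ X ^ k - 1) :
    IsUnit g := by
  have hd : g ∣ (2 : ℚ[X]) := by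
    have : (2 : ℚ[X]) = (X ^ k + 1) - (X ^ k - 1) := by ring
    rw [this]
    exact dvd_sub h1 h2
  refine isUnit_of_dvd_unit hd ?_
  have h2 : (C (2 : ℚ)) = (2 : ℚ[X]) := map_ofNat C 2
  rw [← h2]
  exact isUnit_C.mpr (by norm_num)

private lemma odd_div_gcd {n m : ℕ} (hn : 0 < n) (hm : 0 < m)
    (h : n.factorization 2 ≤ m.factorization 2) : Odd (n / Nat.gcd n m) := by
  have hd : Nat.gcd n m ∣ n := Nat.gcd_dvd_left n m
  have hdpos : 0 < Nat.gcd n m := Nat.gcd_pos_of_pos_left m hn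
  have hq : 0 < n / Nat.gcd n m := Nat.div_pos (Nat.le_of_dvd hn hd) hdpos
  have hf : (n / Nat.gcd n m).factorization 2 = 0 := by
    rw [Nat.factorization_div hd, Finsupp.tsub_apply,
      Nat.factorization_gcd hn.ne' hm.ne', Finsupp.inf_apply, min_eq_left h]
    simp
  rw [Nat.factorization_eq_zero_iff] at hf
  rcases hf with h' | h' | h'
  · exact absurd Nat.prime_two h'
  · exact Nat.odd_iff.mpr (Nat.two_dvd_ne_zero.mp h')
  · omega

private lemma two_gcd_dvd {n m : ℕ} (hn : 0 < n) (hm : 0 < m)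
    (h : n.factorization 2 < m.factorization 2) : 2 * Nat.gcd n m ∣ m := by
  have hd : Nat.gcd n m ∣ m := Nat.gcd_dvd_right n m
  have hdpos : 0 < Nat.gcd n m := Nat.gcd_pos_of_pos_left m hn
  have hq : 0 < m / Nat.gcd n m := Nat.div_pos (Nat.le_of_dvd hm hd) hdpos
  have hf : (m / Nat.gcd n m).factorization 2 ≠ 0 := by
    rw [Nat.factorization_div hd, Finsupp.tsub_apply,
      Nat.factorization_gcd hn.ne' hm.ne', Finsupp.inf_apply, min_eq_left h.le]
    omega
  have h2 : 2 ∣ m / Nat.gcd n m := Nat.dvd_of_factorization_pos hf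
  obtain ⟨c, hc⟩ := h2
  have hdm := Nat.div_mul_cancel hd
  refine ⟨c, ?_⟩
  conv_lhs => rw [← hdm]
  rw [hc]
  ring

private lemma gcd_dvd_xpd {n m : ℕ} (hn : 0 < n) (hm : 0 < m) :
    gcd ((X : ℚ[X]) ^ n + 1) ((X : ℚ[X]) ^ m + 1) ∣ (X : ℚ[X]) ^ Nat.gcd n m + 1 := by
  set g := gcd ((X : ℚ[X]) ^ n + 1) ((X : ℚ[X]) ^ m + 1) with hg
  have sq : ∀ k : ℕ, (X : ℚ[X]) ^ (2 * k) - 1 = (X ^ k + 1) * (X ^ k - 1) := by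
    intro k
    rw [two_mul, pow_add]
    ring
  have hgn : g ∣ (X : ℚ[X]) ^ (2 * n) - 1 := by
    rw [sq n]
    exact Dvd.dvd.mul_right (gcd_dvd_left _ _) _
  have hgm : g ∣ (X : ℚ[X]) ^ (2 * m) - 1 := by
    rw [sq m]
    exact Dvd.dvd.mul_right (gcd_dvd_right _ _) _
  have hgd : g ∣ (X : ℚ[X]) ^ (2 * Nat.gcd n m) - 1 := by
    have := dvd_gcd_xps (2 * n) (2 * m) hgn hgm
    rwa [Nat.gcd_mul_left] at this
  rw [sq (Nat.gcd n m)] at hgd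
  have hcop : IsCoprime g ((X : ℚ[X]) ^ Nat.gcd n m - 1) := by
    refine ((cop_xpa_xps n).of_isCoprime_of_dvd_left (gcd_dvd_left _ _)).of_isCoprime_of_dvd_right
      (xps_dvd_xps (Nat.gcd_dvd_left n m))
  exact hcop.dvd_of_dvd_mul_right hgd

private lemma gcd_unit_of_lt {n m : ℕ} (hn : 0 < n) (hm : 0 < m)
    (h : n.factorization 2 < m.factorization 2) :
    IsUnit (gcd ((X : ℚ[X]) ^ n + 1) ((X : ℚ[X]) ^ m + 1)) := by
  have hgd := gcd_dvd_xpd hn hm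
  have h2d : 2 * Nat.gcd n m ∣ m := two_gcd_dvd hn hm h
  have hx : (X : ℚ[X]) ^ Nat.gcd n m + 1 ∣ X ^ m - 1 := by
    have h1 : (X : ℚ[X]) ^ Nat.gcd n m + 1 ∣ X ^ (2 * Nat.gcd n m) - 1 := by
      have : (X : ℚ[X]) ^ (2 * Nat.gcd n m) - 1
          = (X ^ Nat.gcd n m + 1) * (X ^ Nat.gcd n m - 1) := by
        rw [two_mul, pow_add]; ring
      rw [this]
      exact Dvd.intro _ rfl
    exact h1.trans (xps_dvd_xps h2d)
  exact g_dvd_two_xps m (gcd_dvd_right _ _) (hgd.trans hx)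

theorem stmt_3 (n m : ℕ) (hn : 0 < n) (hm : 0 < m) :
    gcd ((X : ℚ[X]) ^ n + 1) ((X : ℚ[X]) ^ m + 1) =
      if 2 ^ (n.factorization 2) = 2 ^ (m.factorization 2) then
        (X : ℚ[X]) ^ (Nat.gcd n m) + 1
      else 1 := by
  split_ifs with h
  · have heq : n.factorization 2 = m.factorization 2 :=
      Nat.pow_right_injective (le_refl 2) h
    have hdvd1 : (X : ℚ[X]) ^ Nat.gcd n m + 1 ∣ X ^ n + 1 :=
      xpa_dvd_xpa (Nat.gcd_dvd_left n m) (odd_div_gcd hn hm heq.le)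
    have hdvd2 : (X : ℚ[X]) ^ Nat.gcd n m + 1 ∣ X ^ m + 1 := by
      have := odd_div_gcd hm hn heq.ge
      rw [Nat.gcd_comm] at this
      exact xpa_dvd_xpa (Nat.gcd_dvd_right n m) this
    have h1 : (X : ℚ[X]) ^ Nat.gcd n m + 1 ∣ gcd ((X : ℚ[X]) ^ n + 1) ((X : ℚ[X]) ^ m + 1) :=
      dvd_gcd hdvd1 hdvd2
    have h2 := gcd_dvd_xpd hn hm
    have hmonic : ((X : ℚ[X]) ^ Nat.gcd n m + 1).Monic := by
      have : ((X : ℚ[X]) ^ Nat.gcd n m + C 1).Monic :=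
        monic_X_pow_add_C 1 (Nat.gcd_pos_of_pos_left m hn).ne'
      simpa using this
    calc gcd ((X : ℚ[X]) ^ n + 1) ((X : ℚ[X]) ^ m + 1)
        = normalize (gcd ((X : ℚ[X]) ^ n + 1) ((X : ℚ[X]) ^ m + 1)) := (normalize_gcd _ _).symm
      _ = normalize ((X : ℚ[X]) ^ Nat.gcd n m + 1) := normalize_eq_normalize h2 h1
      _ = (X : ℚ[X]) ^ Nat.gcd n m + 1 := hmonic.normalize_eq_self
  · have hne : n.factorization 2 ≠ m.factorization 2 := fun he => h (by rw [he])
    have hu : IsUnit (gcd ((X : ℚ[X]) ^ n + 1) ((X : ℚ[X]) ^ m + 1)) := by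
      rcases hne.lt_or_gt with hlt | hlt
      · exact gcd_unit_of_lt hn hm hlt
      · have := gcd_unit_of_lt hm hn hlt
        rwa [gcd_comm] at this
    rw [← normalize_gcd, normalize_eq_one.mpr hu]
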